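/- Let k_j^B(p,q) = (1/(2π))[Q_{j-1/2}((p/q + q/p)/2) + Q_{j+1/2}((p/q + q/p)/2)] and k_l^C(p,q) = (1/π) Q_l((p/q + q/p)/2), where Q_l are Legendre functions of the second kind. Define critical constants by 1/κ_j^B = ∫_0^∞ k_j^B(t, 1) dt/t evaluated along (t + 1/t)/2, i.e. 1/κ_j^B = ∫_0^∞ k_j^B applied to ((1/t + t)/2) dt/t, and similarly 1/κ_l^C. Then κ_{1/2}^B = 2/(2/π + π/2) and κ_0^C = 2/π and κ_1^C = π/2. -/

import Mathlib

open MeasureTheory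

/-- The Legendre polynomials, via Bonnet's recursion. -/
noncomputable def legendreP : ℕ → ℝ → ℝ
  | 0, _ => 1
  | 1, t => t
  | (n + 2), t =>
      ((2 * (n : ℝ) + 3) * t * legendreP (n + 1) t - ((n : ℝ) + 1) * legendreP n t) /
        ((n : ℝ) + 2)

/-- The Legendre function of the second kind, via Neumann's integral. -/
noncomputable def legendreQ (l : ℕ) (z : ℝ) : ℝ :=
  (1 / 2) * ∫ t in (-1 : ℝ)..1, legendreP l t / (z - t)

open Set Filter Real Topology

example (t : ℝ) : legendreP 0 t = 1 := rfl
example (t : ℝ) : legendreP 1 t = t := rfl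

lemma legendreQ_zero {z : ℝ} (hz : 1 < z) :
    legendreQ 0 z = (Real.log (z + 1) - Real.log (z - 1)) / 2 := by
  have key : ∫ t in (-1 : ℝ)..1, legendreP 0 t / (z - t)
      = Real.log (z + 1) - Real.log (z - 1) := by
    have h : ∀ t ∈ Set.uIcc (-1 : ℝ) 1, HasDerivAt (fun t => -Real.log (z - t))
        (legendreP 0 t / (z - t)) t := by
      intro t ht
      rw [Set.uIcc_of_le (by norm_num : (-1:ℝ) ≤ 1)] at ht
      have hzt : 0 < z - t := by linarith [ht.2]
      have h1 : HasDerivAt (fun t : ℝ => z - t) (-1) t := (hasDerivAt_id t).const_sub z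
      have h2 := (Real.hasDerivAt_log hzt.ne').comp t h1
      have h3 := h2.neg
      have h4 : HasDerivAt (fun t => -Real.log (z - t)) (-((z - t)⁻¹ * (-1))) t := h3
      convert h4 using 1
      show legendreP 0 t / (z - t) = -((z - t)⁻¹ * (-1))
      simp [legendreP, one_div]
    have hint : IntervalIntegrable (fun t => legendreP 0 t / (z - t)) volume (-1) 1 := by
      apply ContinuousOn.intervalIntegrable
      rw [Set.uIcc_of_le (by norm_num : (-1:ℝ) ≤ 1)]
      show ContinuousOn (fun t : ℝ => 1 / (z - t)) _
      refine ContinuousOn.div continuousOn_const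
        (continuous_const.sub continuous_id).continuousOn (fun x hx => ?_)
      have : 0 < z - x := by linarith [hx.2]
      exact this.ne'
    rw [intervalIntegral.integral_eq_sub_of_hasDerivAt h hint]
    have : z - (-1 : ℝ) = z + 1 := by ring
    rw [this]; ring
  rw [legendreQ, key]; ring

lemma legendreQ_one {z : ℝ} (hz : 1 < z) :
    legendreQ 1 z = z * (Real.log (z + 1) - Real.log (z - 1)) / 2 - 1 := by
  have key : ∫ t in (-1 : ℝ)..1, legendreP 1 t / (z - t)
      = z * (Real.log (z + 1) - Real.log (z - 1)) - 2 := by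
    have h : ∀ t ∈ Set.uIcc (-1 : ℝ) 1, HasDerivAt (fun t => -(z * Real.log (z - t)) - t)
        (legendreP 1 t / (z - t)) t := by
      intro t ht
      rw [Set.uIcc_of_le (by norm_num : (-1:ℝ) ≤ 1)] at ht
      have hzt : 0 < z - t := by linarith [ht.2]
      have h1 : HasDerivAt (fun t : ℝ => z - t) (-1) t := (hasDerivAt_id t).const_sub z
      have h2 := ((Real.hasDerivAt_log hzt.ne').comp t h1).const_mul z
      have h3 := h2.neg.sub (hasDerivAt_id t)
      have h4 : HasDerivAt (fun t => -(z * Real.log (z - t)) - t)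
        (-(z * ((z - t)⁻¹ * (-1))) - 1) t := h3
      convert h4 using 1
      show legendreP 1 t / (z - t) = -(z * ((z - t)⁻¹ * (-1))) - 1
      show t / (z - t) = -(z * ((z - t)⁻¹ * (-1))) - 1
      field_simp
      ring
    have hint : IntervalIntegrable (fun t => legendreP 1 t / (z - t)) volume (-1) 1 := by
      apply ContinuousOn.intervalIntegrable
      rw [Set.uIcc_of_le (by norm_num : (-1:ℝ) ≤ 1)]
      show ContinuousOn (fun t : ℝ => t / (z - t)) _
      refine ContinuousOn.div continuous_id.continuousOn
        (continuous_const.sub continuous_id).continuousOn (fun x hx => ?_)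
      have : 0 < z - x := by linarith [hx.2]
      exact this.ne'
    rw [intervalIntegral.integral_eq_sub_of_hasDerivAt h hint]
    have : z - (-1 : ℝ) = z + 1 := by ring
    rw [this]
    have h1 : 0 < z - 1 := by linarith
    have h2 : 0 < z + 1 := by linarith
    ring
  rw [legendreQ, key]; ring

lemma z_gt_one_of_Ioo {t : ℝ} (ht : t ∈ Ioo (0:ℝ) 1) : 1 < (t + 1/t)/2 := by
  obtain ⟨h0, h1⟩ := ht
  have h : (t + 1/t)/2 - 1 = (1-t)^2/(2*t) := by field_simp; ring
  have hp : (0:ℝ) < (1-t)^2/(2*t) := div_pos (by nlinarith) (by linarith)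
  linarith

lemma z_gt_one_of_Ioi {t : ℝ} (ht : t ∈ Ioi (1:ℝ)) : 1 < (t + 1/t)/2 := by
  have h1 : (1:ℝ) < t := ht
  have h0 : (0:ℝ) < t := lt_trans one_pos h1
  have h : (t + 1/t)/2 - 1 = (t-1)^2/(2*t) := by field_simp; ring
  have hp : (0:ℝ) < (t-1)^2/(2*t) := div_pos (by nlinarith) (by linarith)
  linarith

lemma lograt_Ioo {t : ℝ} (ht : t ∈ Ioo (0:ℝ) 1) :
    Real.log ((t + 1/t)/2 + 1) - Real.log ((t + 1/t)/2 - 1)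
      = 2 * (Real.log (1 + t) - Real.log (1 - t)) := by
  obtain ⟨h0, h1⟩ := ht
  have e1 : (t + 1/t)/2 + 1 = (1+t)^2/(2*t) := by field_simp; ring
  have e2 : (t + 1/t)/2 - 1 = (1-t)^2/(2*t) := by field_simp; ring
  have p1 : (0:ℝ) < (1+t)^2 := by positivity
  have p2 : (0:ℝ) < (1-t)^2 := by nlinarith
  rw [e1, e2, Real.log_div p1.ne' (by positivity), Real.log_div p2.ne' (by positivity),
    Real.log_pow, Real.log_pow]
  push_cast; ring

lemma lograt_Ioi {t : ℝ} (ht : t ∈ Ioi (1:ℝ)) :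
    Real.log ((t + 1/t)/2 + 1) - Real.log ((t + 1/t)/2 - 1)
      = 2 * (Real.log (t + 1) - Real.log (t - 1)) := by
  have h1 : (1:ℝ) < t := ht
  have h0 : (0:ℝ) < t := lt_trans one_pos h1
  have e1 : (t + 1/t)/2 + 1 = (t+1)^2/(2*t) := by field_simp; ring
  have e2 : (t + 1/t)/2 - 1 = (t-1)^2/(2*t) := by field_simp; ring
  have p1 : (0:ℝ) < (t+1)^2 := by positivity
  have p2 : (0:ℝ) < (t-1)^2 := by nlinarith
  rw [e1, e2, Real.log_div p1.ne' (by positivity), Real.log_div p2.ne' (by positivity),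
    Real.log_pow, Real.log_pow]
  push_cast; ring

set_option maxHeartbeats 800000 in
lemma hasSum_odd_sq : HasSum (fun k : ℕ => 1 / ((2*(k:ℝ)+1))^2) (Real.pi^2/8) := by
  have hz := hasSum_zeta_two
  have heven : HasSum (fun k : ℕ => (1:ℝ) / (((2*k : ℕ)):ℝ)^2) (Real.pi^2/24) := by
    have h := hz.mul_left (1/4)
    have e : (fun k : ℕ => (1:ℝ) / (((2*k : ℕ)):ℝ)^2)
        = fun k : ℕ => 1/4 * ((1:ℝ)/(k:ℝ)^2) := by
      funext k
      rcases eq_or_ne (k:ℝ) 0 with h0|h0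
      · push_cast [h0]; norm_num
      · push_cast; field_simp; ring
    rw [e, show Real.pi^2/24 = 1/4 * (Real.pi^2/6) by ring]
    exact h
  have hinj : Function.Injective (fun k : ℕ => 2*k+1) := fun a b h => by dsimp only at h; omega
  have hodd_sum : Summable (fun k : ℕ => (1:ℝ) / (((2*k+1 : ℕ)):ℝ)^2) :=
    hz.summable.comp_injective hinj
  obtain ⟨b, hb⟩ := hodd_sum
  have htot := HasSum.even_add_odd (f := fun n : ℕ => (1:ℝ)/(n:ℝ)^2) heven hb
  have hbval : b = Real.pi^2/8 := by have := htot.unique hz; linarith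
  rw [hbval] at hb
  have e2 : (fun k : ℕ => (1:ℝ) / (((2*k+1 : ℕ)):ℝ)^2)
      = fun k : ℕ => 1 / ((2*(k:ℝ)+1))^2 := by
    funext k; push_cast; ring
  rwa [e2] at hb

lemma hasSum_telescope {b : ℕ → ℝ} (h0 : ∀ k, b (k+1) ≤ b k) (hb : Tendsto b atTop (𝓝 0)) :
    HasSum (fun k => b k - b (k+1)) (b 0) := by
  rw [hasSum_iff_tendsto_nat_of_nonneg (fun k => by linarith [h0 k])]
  have he : ∀ n, ∑ i ∈ Finset.range n, (b i - b (i+1)) = b 0 - b n :=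
    fun n => Finset.sum_range_sub' b n
  simp_rw [he]
  simpa using (tendsto_const_nhds (x := b 0)).sub hb

lemma integral_eq_tsum_aux {s : Set ℝ} (hs : MeasurableSet s)
    (f : ℕ → ℝ → ℝ) (g : ℝ → ℝ) (a : ℕ → ℝ) (A : ℝ)
    (hg : Measurable g)
    (hgf : ∀ x ∈ s, HasSum (fun k => f k x) (g x))
    (hnn : ∀ k, ∀ x ∈ s, 0 ≤ f k x)
    (hint : ∀ k, IntegrableOn (f k) s)
    (hfa : ∀ k, ∫ x in s, f k x = a k)
    (hA : HasSum a A) :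
    IntegrableOn g s ∧ ∫ x in s, g x = A := by
  have ha_nonneg : ∀ k, 0 ≤ a k := fun k =>
    (hfa k) ▸ setIntegral_nonneg hs (hnn k)
  have hA_nonneg : 0 ≤ A := hA.nonneg ha_nonneg
  have hmem : ∀ᵐ x ∂(volume.restrict s), x ∈ s := ae_restrict_mem hs
  have hg_nonneg : 0 ≤ᵐ[volume.restrict s] g := by
    filter_upwards [hmem] with x hx
    exact (hgf x hx).nonneg (fun k => hnn k x hx)
  have key : ∫⁻ x in s, ENNReal.ofReal (g x) = ENNReal.ofReal A := by
    have step1 : ∫⁻ x in s, ENNReal.ofReal (g x)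
        = ∫⁻ x in s, ∑' k, ENNReal.ofReal (f k x) := by
      apply lintegral_congr_ae
      filter_upwards [hmem] with x hx
      rw [← (hgf x hx).tsum_eq,
        ENNReal.ofReal_tsum_of_nonneg (fun k => hnn k x hx) (hgf x hx).summable]
    have step2 : ∫⁻ x in s, ∑' k, ENNReal.ofReal (f k x)
        = ∑' k, ∫⁻ x in s, ENNReal.ofReal (f k x) := by
      apply lintegral_tsum
      intro k
      exact (ENNReal.measurable_ofReal.comp_aemeasurable
        (hint k).aestronglyMeasurable.aemeasurable)
    have step3 : ∀ k, ∫⁻ x in s, ENNReal.ofReal (f k x) = ENNReal.ofReal (a k) := by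
      intro k
      rw [← ofReal_integral_eq_lintegral_ofReal (hint k) ?_, hfa k]
      filter_upwards [hmem] with x hx using hnn k x hx
    rw [step1, step2]
    simp_rw [step3]
    rw [← ENNReal.ofReal_tsum_of_nonneg ha_nonneg hA.summable, hA.tsum_eq]
  have hgint : IntegrableOn g s := by
    refine ⟨hg.aestronglyMeasurable, ?_⟩
    rw [hasFiniteIntegral_iff_ofReal hg_nonneg, key]
    exact ENNReal.ofReal_lt_top
  refine ⟨hgint, ?_⟩
  rw [integral_eq_lintegral_of_nonneg_ae hg_nonneg hg.aestronglyMeasurable, key,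
    ENNReal.toReal_ofReal hA_nonneg]

lemma pieceA : IntegrableOn (fun t => (Real.log (1+t) - Real.log (1-t))/t) (Ioo (0:ℝ) 1)
    ∧ ∫ t in Ioo (0:ℝ) 1, (Real.log (1+t) - Real.log (1-t))/t = Real.pi^2/4 := by
  apply integral_eq_tsum_aux measurableSet_Ioo
    (f := fun k t => 2/(2*(k:ℝ)+1) * t^(2*k))
    (a := fun k => 2 * (1/(2*(k:ℝ)+1)^2))
  · exact ((Real.measurable_log.comp (measurable_const.add measurable_id)).sub
      (Real.measurable_log.comp (measurable_const.sub measurable_id))).div measurable_id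
  · intro x hx
    obtain ⟨h0, h1⟩ := hx
    have habs : |x| < 1 := by rw [abs_of_pos h0]; exact h1
    have base := Real.hasSum_log_sub_log_of_abs_lt_one habs
    have hdiv := base.div_const x
    have e : (fun k : ℕ => 2*(1/(2*(k:ℝ)+1))*x^(2*k+1)/x)
        = fun k : ℕ => 2/(2*(k:ℝ)+1) * x^(2*k) := by
      funext k
      rw [pow_succ]
      have hden : (2*(k:ℝ)+1) ≠ 0 := by positivity
      field_simp
    rwa [e] at hdiv
  · intro k x hx
    have : (0:ℝ) ≤ x^(2*k) := pow_nonneg hx.1.le _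
    positivity
  · intro k
    exact (((continuous_pow (2*k)).integrableOn_Icc (a := (0:ℝ)) (b := 1)).mono_set
      Ioo_subset_Icc_self).const_mul _
  · intro k
    rw [integral_const_mul]
    have : ∫ t in Ioo (0:ℝ) 1, t^(2*k) = 1/(2*(k:ℝ)+1) := by
      rw [← integral_Ioc_eq_integral_Ioo, ← intervalIntegral.integral_of_le zero_le_one,
        integral_pow]
      push_cast
      rw [zero_pow (by omega), one_pow]
      ring
    rw [this]
    have hden : (2*(k:ℝ)+1) ≠ 0 := by positivity
    field_simp
  · have h := hasSum_odd_sq.mul_left 2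
    rwa [show Real.pi^2/4 = 2*(Real.pi^2/8) by ring]

lemma pieceB : IntegrableOn (fun t => (Real.log (t+1) - Real.log (t-1))/t) (Ioi (1:ℝ))
    ∧ ∫ t in Ioi (1:ℝ), (Real.log (t+1) - Real.log (t-1))/t = Real.pi^2/4 := by
  apply integral_eq_tsum_aux measurableSet_Ioi
    (f := fun k t => 2/(2*(k:ℝ)+1) * t^(-2*(k:ℝ)-2))
    (a := fun k => 2 * (1/(2*(k:ℝ)+1)^2))
  · exact ((Real.measurable_log.comp (measurable_id.add measurable_const)).sub
      (Real.measurable_log.comp (measurable_id.sub measurable_const))).div measurable_id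
  · intro t ht
    have h1 : (1:ℝ) < t := ht
    have h0 : (0:ℝ) < t := lt_trans one_pos h1
    set x : ℝ := 1/t with hxdef
    have hx0 : 0 < x := by positivity
    have hx1 : x < 1 := by rw [hxdef, div_lt_one h0]; exact h1
    have habs : |x| < 1 := by rw [abs_of_pos hx0]; exact hx1
    have base := Real.hasSum_log_sub_log_of_abs_lt_one habs
    have hval : Real.log (1 + x) - Real.log (1 - x)
        = Real.log (t+1) - Real.log (t-1) := by
      rw [hxdef, show 1 + 1/t = (t+1)/t by field_simp,
        show 1 - 1/t = (t-1)/t by field_simp,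
        Real.log_div (by linarith) h0.ne', Real.log_div (by linarith) h0.ne']
      ring
    rw [hval] at base
    have hdiv := base.div_const t
    have e : (fun k : ℕ => 2*(1/(2*(k:ℝ)+1))*x^(2*k+1)/t)
        = fun k : ℕ => 2/(2*(k:ℝ)+1) * t^(-2*(k:ℝ)-2) := by
      funext k
      have hr : t ^ (-2*(k:ℝ)-2) = (t^(2*k+2 : ℕ))⁻¹ := by
        rw [← Real.rpow_natCast t (2*k+2), ← Real.rpow_neg h0.le]
        congr 1
        push_cast; ring
      rw [hr, hxdef, div_pow, one_pow]
      have hden : (2*(k:ℝ)+1) ≠ 0 := by positivity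
      have hp : t^(2*k+1) ≠ 0 := pow_ne_zero _ h0.ne'
      have hp2 : t^(2*k+2) ≠ 0 := pow_ne_zero _ h0.ne'
      field_simp
      ring
    rwa [e] at hdiv
  · intro k x hx
    have h0 : (0:ℝ) < x := lt_trans one_pos hx
    have : (0:ℝ) ≤ x ^ (-2*(k:ℝ)-2) := (Real.rpow_pos_of_pos h0 _).le
    positivity
  · intro k
    exact (integrableOn_Ioi_rpow_of_lt (by push_cast; linarith [Nat.cast_nonneg (α := ℝ) k])
      one_pos).const_mul _
  · intro k
    rw [integral_const_mul, integral_Ioi_rpow_of_lt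
      (by push_cast; linarith [Nat.cast_nonneg (α := ℝ) k]) one_pos]
    rw [Real.one_rpow, show (-2*(k:ℝ)-2) + 1 = -(2*(k:ℝ)+1) by ring, div_neg, neg_div,
      neg_neg]
    have hden : (2*(k:ℝ)+1) ≠ 0 := by positivity
    field_simp
  · have h := hasSum_odd_sq.mul_left 2
    rwa [show Real.pi^2/4 = 2*(Real.pi^2/8) by ring]

lemma hasSum_tel : HasSum
    (fun k : ℕ => (1/(2*(k:ℝ)+1) + 1/(2*(k:ℝ)+3)) * (1/(2*(k:ℝ)+2))) 1 := by
  have hb : Tendsto (fun k : ℕ => 1/(2*(k:ℝ)+1)) atTop (𝓝 0) := by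
    simp_rw [one_div]
    apply Tendsto.inv_tendsto_atTop
    apply Filter.tendsto_atTop_add_const_right
    exact (tendsto_natCast_atTop_atTop (R := ℝ)).const_mul_atTop two_pos
  have h0 : ∀ k : ℕ, 1/(2*((k:ℝ)+1)+1) ≤ 1/(2*(k:ℝ)+1) := by
    intro k
    apply one_div_le_one_div_of_le (by positivity)
    linarith
  have htel := hasSum_telescope (b := fun k : ℕ => 1/(2*(k:ℝ)+1)) (fun k => by
    have := h0 k; push_cast; push_cast at this; linarith) hb
  have e2 : (fun k : ℕ => (1/(2*(k:ℝ)+1) + 1/(2*(k:ℝ)+3)) * (1/(2*(k:ℝ)+2)))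
      = fun k : ℕ => 1/(2*(k:ℝ)+1) - 1/(2*((k+1:ℕ):ℝ)+1) := by
    funext k
    push_cast
    have d1 : (2*(k:ℝ)+1) ≠ 0 := by positivity
    have d2 : (2*(k:ℝ)+2) ≠ 0 := by positivity
    have d3 : (2*(k:ℝ)+3) ≠ 0 := by positivity
    field_simp
    ring
  rw [e2]
  convert htel using 1
  norm_num

lemma pieceC : IntegrableOn
      (fun t => ((t + 1/t)/2 * (Real.log (1+t) - Real.log (1-t)) - 1)/t) (Ioo (0:ℝ) 1)
    ∧ ∫ t in Ioo (0:ℝ) 1,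
        ((t + 1/t)/2 * (Real.log (1+t) - Real.log (1-t)) - 1)/t = 1 := by
  apply integral_eq_tsum_aux measurableSet_Ioo
    (f := fun k t => (1/(2*(k:ℝ)+1) + 1/(2*(k:ℝ)+3)) * t^(2*k+1))
    (a := fun k => (1/(2*(k:ℝ)+1) + 1/(2*(k:ℝ)+3)) * (1/(2*(k:ℝ)+2)))
  · apply Measurable.div _ measurable_id
    apply Measurable.sub _ measurable_const
    apply Measurable.mul
    · exact (measurable_id.add (measurable_const.div measurable_id)).div measurable_const
    · exact (Real.measurable_log.comp (measurable_const.add measurable_id)).sub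
        (Real.measurable_log.comp (measurable_const.sub measurable_id))
  · intro x hx
    obtain ⟨h0, h1⟩ := hx
    have habs : |x| < 1 := by rw [abs_of_pos h0]; exact h1
    have base := Real.hasSum_log_sub_log_of_abs_lt_one habs
    set L := Real.log (1+x) - Real.log (1-x) with hL
    -- A1 : sum of (1/(2k+1)) x^(2k+1) is L/2
    have A1 : HasSum (fun k : ℕ => 1/(2*(k:ℝ)+1) * x^(2*k+1)) (L/2) := by
      have := base.div_const 2
      have e : (fun k : ℕ => 2*(1/(2*(k:ℝ)+1))*x^(2*k+1)/2)
          = fun k : ℕ => 1/(2*(k:ℝ)+1) * x^(2*k+1) := by funext k; ring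
      rwa [e] at this
    -- shifted : sum over k of (1/(2k+3)) x^(2k+3) is L/2 - x
    have A2 : HasSum (fun k : ℕ => 1/(2*((k:ℝ)+1)+1) * x^(2*(k+1)+1)) (L/2 - x) := by
      have h := (hasSum_nat_add_iff' (f := fun k : ℕ => 1/(2*(k:ℝ)+1) * x^(2*k+1)) 1).2 A1
      simp only [Finset.range_one, Finset.sum_singleton] at h
      norm_num at h
      have h' : HasSum (fun n : ℕ => (2 * ((n:ℝ) + 1) + 1)⁻¹ * x ^ (2 * (n + 1) + 1)) (L / 2 - x) := h
      convert h' using 2 with k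
      push_cast
      ring
    -- divide by x^2 : sum of (1/(2k+3)) x^(2k+1) is (L/2 - x)/x^2
    have A3 : HasSum (fun k : ℕ => 1/(2*(k:ℝ)+3) * x^(2*k+1)) ((L/2 - x)/x^2) := by
      have h := A2.div_const (x^2)
      have e : (fun k : ℕ => 1/(2*((k:ℝ)+1)+1) * x^(2*(k+1)+1)/x^2)
          = fun k : ℕ => 1/(2*(k:ℝ)+3) * x^(2*k+1) := by
        funext k
        have hx2 : x^2 ≠ 0 := pow_ne_zero _ h0.ne'
        rw [show 2*(k+1)+1 = (2*k+1)+2 by ring, pow_add]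
        field_simp
        ring
      rwa [e] at h
    have hsum := A1.add A3
    have e : (fun k : ℕ => 1/(2*(k:ℝ)+1) * x^(2*k+1) + 1/(2*(k:ℝ)+3) * x^(2*k+1))
        = fun k : ℕ => (1/(2*(k:ℝ)+1) + 1/(2*(k:ℝ)+3)) * x^(2*k+1) := by
      funext k; ring
    rw [e] at hsum
    have hval : L/2 + (L/2 - x)/x^2 = ((x + 1/x)/2 * L - 1)/x := by
      field_simp
      ring
    rwa [hval] at hsum
  · intro k x hx
    have h1 : (0:ℝ) ≤ x^(2*k+1) := pow_nonneg hx.1.le _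
    have h2 : (0:ℝ) ≤ 1/(2*(k:ℝ)+1) + 1/(2*(k:ℝ)+3) := by positivity
    exact mul_nonneg h2 h1
  · intro k
    exact (((continuous_pow (2*k+1)).integrableOn_Icc (a := (0:ℝ)) (b := 1)).mono_set
      Ioo_subset_Icc_self).const_mul _
  · intro k
    rw [integral_const_mul]
    have : ∫ t in Ioo (0:ℝ) 1, t^(2*k+1) = 1/(2*(k:ℝ)+2) := by
      rw [← integral_Ioc_eq_integral_Ioo, ← intervalIntegral.integral_of_le zero_le_one,
        integral_pow]
      push_cast
      rw [zero_pow (by omega), one_pow]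
      ring
    rw [this]
  · exact hasSum_tel

lemma pieceD : IntegrableOn
      (fun t => ((t + 1/t)/2 * (Real.log (t+1) - Real.log (t-1)) - 1)/t) (Ioi (1:ℝ))
    ∧ ∫ t in Ioi (1:ℝ),
        ((t + 1/t)/2 * (Real.log (t+1) - Real.log (t-1)) - 1)/t = 1 := by
  apply integral_eq_tsum_aux measurableSet_Ioi
    (f := fun k t => (1/(2*(k:ℝ)+1) + 1/(2*(k:ℝ)+3)) * t^(-2*(k:ℝ)-3))
    (a := fun k => (1/(2*(k:ℝ)+1) + 1/(2*(k:ℝ)+3)) * (1/(2*(k:ℝ)+2)))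
  · apply Measurable.div _ measurable_id
    apply Measurable.sub _ measurable_const
    apply Measurable.mul
    · exact (measurable_id.add (measurable_const.div measurable_id)).div measurable_const
    · exact (Real.measurable_log.comp (measurable_id.add measurable_const)).sub
        (Real.measurable_log.comp (measurable_id.sub measurable_const))
  · intro t ht
    have h1 : (1:ℝ) < t := ht
    have h0 : (0:ℝ) < t := lt_trans one_pos h1
    set x : ℝ := 1/t with hxdef
    have hx0 : 0 < x := by positivity
    have hx1 : x < 1 := by rw [hxdef, div_lt_one h0]; exact h1
    have habs : |x| < 1 := by rw [abs_of_pos hx0]; exact hx1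
    have base := Real.hasSum_log_sub_log_of_abs_lt_one habs
    have hvalL : Real.log (1 + x) - Real.log (1 - x)
        = Real.log (t+1) - Real.log (t-1) := by
      rw [hxdef, show 1 + 1/t = (t+1)/t by field_simp,
        show 1 - 1/t = (t-1)/t by field_simp,
        Real.log_div (by linarith) h0.ne', Real.log_div (by linarith) h0.ne']
      ring
    rw [hvalL] at base
    set L := Real.log (t+1) - Real.log (t-1) with hL
    have A1 : HasSum (fun k : ℕ => 1/(2*(k:ℝ)+1) * x^(2*k+1)) (L/2) := by
      have := base.div_const 2
      have e : (fun k : ℕ => 2*(1/(2*(k:ℝ)+1))*x^(2*k+1)/2)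
          = fun k : ℕ => 1/(2*(k:ℝ)+1) * x^(2*k+1) := by funext k; ring
      rwa [e] at this
    -- T1 : sum of (1/(2k+1)) x^(2k+3) is x^2 * L/2
    have T1 : HasSum (fun k : ℕ => 1/(2*(k:ℝ)+1) * x^(2*k+3)) (x^2 * (L/2)) := by
      have h := A1.mul_left (x^2)
      have e : (fun k : ℕ => x^2 * (1/(2*(k:ℝ)+1) * x^(2*k+1)))
          = fun k : ℕ => 1/(2*(k:ℝ)+1) * x^(2*k+3) := by
        funext k
        rw [show 2*k+3 = (2*k+1)+2 by ring, pow_add]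
        ring
      rwa [e] at h
    -- T2 : sum of (1/(2k+3)) x^(2k+3) is L/2 - x
    have T2 : HasSum (fun k : ℕ => 1/(2*(k:ℝ)+3) * x^(2*k+3)) (L/2 - x) := by
      have h := (hasSum_nat_add_iff' (f := fun k : ℕ => 1/(2*(k:ℝ)+1) * x^(2*k+1)) 1).2 A1
      simp only [Finset.range_one, Finset.sum_singleton] at h
      norm_num at h
      have h' : HasSum (fun n : ℕ => (2 * ((n:ℝ) + 1) + 1)⁻¹ * x ^ (2 * (n + 1) + 1)) (L / 2 - x) := h
      convert h' using 2 with k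
      push_cast
      ring_nf
    have hsum := T1.add T2
    have e : (fun k : ℕ => 1/(2*(k:ℝ)+1) * x^(2*k+3) + 1/(2*(k:ℝ)+3) * x^(2*k+3))
        = fun k : ℕ => (1/(2*(k:ℝ)+1) + 1/(2*(k:ℝ)+3)) * x^(2*k+3) := by
      funext k; ring
    rw [e] at hsum
    have e2 : (fun k : ℕ => (1/(2*(k:ℝ)+1) + 1/(2*(k:ℝ)+3)) * x^(2*k+3))
        = fun k : ℕ => (1/(2*(k:ℝ)+1) + 1/(2*(k:ℝ)+3)) * t^(-2*(k:ℝ)-3) := by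
      funext k
      have hr : t ^ (-2*(k:ℝ)-3) = (t^(2*k+3 : ℕ))⁻¹ := by
        rw [← Real.rpow_natCast t (2*k+3), ← Real.rpow_neg h0.le]
        congr 1
        push_cast; ring
      rw [hr, hxdef, div_pow, one_pow]
      simp
    rw [e2] at hsum
    have hval : x^2 * (L/2) + (L/2 - x) = ((t + 1/t)/2 * L - 1)/t := by
      rw [hxdef]
      field_simp
      ring
    rwa [hval] at hsum
  · intro k x hx
    have h0 : (0:ℝ) < x := lt_trans one_pos hx
    have h2 : (0:ℝ) ≤ 1/(2*(k:ℝ)+1) + 1/(2*(k:ℝ)+3) := by positivity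
    exact mul_nonneg h2 (Real.rpow_pos_of_pos h0 _).le
  · intro k
    exact (integrableOn_Ioi_rpow_of_lt (by linarith [Nat.cast_nonneg (α := ℝ) k])
      one_pos).const_mul _
  · intro k
    rw [integral_const_mul, integral_Ioi_rpow_of_lt
      (by linarith [Nat.cast_nonneg (α := ℝ) k]) one_pos]
    rw [Real.one_rpow, show (-2*(k:ℝ)-3) + 1 = -(2*(k:ℝ)+2) by ring, div_neg, neg_div,
      neg_neg]
  · exact hasSum_tel

lemma glue {G g₁ g₂ : ℝ → ℝ} (h₁ : EqOn G g₁ (Ioo 0 1)) (h₂ : EqOn G g₂ (Ioi 1))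
    (i₁ : IntegrableOn g₁ (Ioo (0:ℝ) 1)) (i₂ : IntegrableOn g₂ (Ioi (1:ℝ))) :
    ∫ t in Ioi (0:ℝ), G t = (∫ t in Ioo (0:ℝ) 1, g₁ t) + ∫ t in Ioi (1:ℝ), g₂ t := by
  have hsplit : Ioi (0:ℝ) = Ioc 0 1 ∪ Ioi 1 := (Ioc_union_Ioi_eq_Ioi zero_le_one).symm
  have hres : volume.restrict (Ioc (0:ℝ) 1) = volume.restrict (Ioo (0:ℝ) 1) :=
    Measure.restrict_congr_set Ioo_ae_eq_Ioc.symm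
  have hGoo : IntegrableOn G (Ioo (0:ℝ) 1) :=
    i₁.congr_fun (fun x hx => (h₁ hx).symm) measurableSet_Ioo
  have hG1 : IntegrableOn G (Ioc (0:ℝ) 1) := by
    rw [IntegrableOn, hres]; exact hGoo
  have hG2 : IntegrableOn G (Ioi (1:ℝ)) :=
    i₂.congr_fun (fun x hx => (h₂ hx).symm) measurableSet_Ioi
  rw [hsplit, setIntegral_union (Ioc_disjoint_Ioi le_rfl) measurableSet_Ioi hG1 hG2]
  congr 1
  · rw [integral_Ioc_eq_integral_Ioo]
    exact setIntegral_congr_fun measurableSet_Ioo h₁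
  · exact setIntegral_congr_fun measurableSet_Ioi h₂

/-- Critical coupling constants: `κ_{1/2}^B = 2/(2/π + π/2)`, `κ_0^C = 2/π`,
`κ_1^C = π/2`, obtained as reciprocals of the corresponding kernel integrals. -/
theorem critical_coupling_constants :
    (∫ t in Set.Ioi (0 : ℝ),
        (1 / (2 * Real.pi)) *
          (legendreQ 0 ((t + 1 / t) / 2) + legendreQ 1 ((t + 1 / t) / 2)) / t)⁻¹
      = 2 / (2 / Real.pi + Real.pi / 2) ∧
    (∫ t in Set.Ioi (0 : ℝ), (1 / Real.pi) * legendreQ 0 ((t + 1 / t) / 2) / t)⁻¹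
      = 2 / Real.pi ∧
    (∫ t in Set.Ioi (0 : ℝ), (1 / Real.pi) * legendreQ 1 ((t + 1 / t) / 2) / t)⁻¹
      = Real.pi / 2 := by
  have pi_ne : Real.pi ≠ 0 := Real.pi_ne_zero
  have hQ0_Ioo : ∀ t ∈ Ioo (0:ℝ) 1,
      legendreQ 0 ((t + 1/t)/2) = Real.log (1+t) - Real.log (1-t) := by
    intro t ht
    rw [legendreQ_zero (z_gt_one_of_Ioo ht), lograt_Ioo ht]
    ring
  have hQ0_Ioi : ∀ t ∈ Ioi (1:ℝ),
      legendreQ 0 ((t + 1/t)/2) = Real.log (t+1) - Real.log (t-1) := by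
    intro t ht
    rw [legendreQ_zero (z_gt_one_of_Ioi ht), lograt_Ioi ht]
    ring
  have hQ1_Ioo : ∀ t ∈ Ioo (0:ℝ) 1,
      legendreQ 1 ((t + 1/t)/2)
        = (t + 1/t)/2 * (Real.log (1+t) - Real.log (1-t)) - 1 := by
    intro t ht
    rw [legendreQ_one (z_gt_one_of_Ioo ht), lograt_Ioo ht]
    ring
  have hQ1_Ioi : ∀ t ∈ Ioi (1:ℝ),
      legendreQ 1 ((t + 1/t)/2)
        = (t + 1/t)/2 * (Real.log (t+1) - Real.log (t-1)) - 1 := by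
    intro t ht
    rw [legendreQ_one (z_gt_one_of_Ioi ht), lograt_Ioi ht]
    ring
  refine ⟨?_, ?_, ?_⟩
  · -- Brown–Ravenhall
    have hval : ∫ t in Set.Ioi (0 : ℝ),
        (1 / (2 * Real.pi)) *
          (legendreQ 0 ((t + 1 / t) / 2) + legendreQ 1 ((t + 1 / t) / 2)) / t
        = (2 / Real.pi + Real.pi / 2) / 2 := by
      rw [glue
        (g₁ := fun t => (1/(2*Real.pi)) * ((Real.log (1+t) - Real.log (1-t))/t
          + ((t + 1/t)/2 * (Real.log (1+t) - Real.log (1-t)) - 1)/t))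
        (g₂ := fun t => (1/(2*Real.pi)) * ((Real.log (t+1) - Real.log (t-1))/t
          + ((t + 1/t)/2 * (Real.log (t+1) - Real.log (t-1)) - 1)/t))
        (fun t ht => by dsimp only; rw [hQ0_Ioo t ht, hQ1_Ioo t ht]; ring)
        (fun t ht => by dsimp only; rw [hQ0_Ioi t ht, hQ1_Ioi t ht]; ring)
        ((pieceA.1.add pieceC.1).const_mul _)
        ((pieceB.1.add pieceD.1).const_mul _),
        integral_const_mul, integral_const_mul,
        integral_add pieceA.1 pieceC.1, integral_add pieceB.1 pieceD.1,
        pieceA.2, pieceB.2, pieceC.2, pieceD.2]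
      field_simp
      ring
    rw [hval, inv_div]
  · -- Chandrasekhar l = 0
    have hval : ∫ t in Set.Ioi (0 : ℝ), (1 / Real.pi) * legendreQ 0 ((t + 1 / t) / 2) / t
        = Real.pi / 2 := by
      rw [glue
        (g₁ := fun t => (1/Real.pi) * ((Real.log (1+t) - Real.log (1-t))/t))
        (g₂ := fun t => (1/Real.pi) * ((Real.log (t+1) - Real.log (t-1))/t))
        (fun t ht => by dsimp only; rw [hQ0_Ioo t ht]; ring)
        (fun t ht => by dsimp only; rw [hQ0_Ioi t ht]; ring)
        (pieceA.1.const_mul _) (pieceB.1.const_mul _),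
        integral_const_mul, integral_const_mul, pieceA.2, pieceB.2]
      field_simp
      ring
    rw [hval, inv_div]
  · -- Chandrasekhar l = 1
    have hval : ∫ t in Set.Ioi (0 : ℝ), (1 / Real.pi) * legendreQ 1 ((t + 1 / t) / 2) / t
        = 2 / Real.pi := by
      rw [glue
        (g₁ := fun t => (1/Real.pi) *
          (((t + 1/t)/2 * (Real.log (1+t) - Real.log (1-t)) - 1)/t))
        (g₂ := fun t => (1/Real.pi) *
          (((t + 1/t)/2 * (Real.log (t+1) - Real.log (t-1)) - 1)/t))
        (fun t ht => by dsimp only; rw [hQ1_Ioo t ht]; ring)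
        (fun t ht => by dsimp only; rw [hQ1_Ioi t ht]; ring)
        (pieceC.1.const_mul _) (pieceD.1.const_mul _),
        integral_const_mul, integral_const_mul, pieceC.2, pieceD.2]
      field_simp
      norm_num
    rw [hval, inv_div]
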